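/- The polynomial q(x) = x⁶ - 5x⁵ + 14x⁴ - 26x³ + 22x² - 8x + 1 has a real root α in the interval (0.2695, 0.2696), and every complex root of q has modulus at least α. -/

import Mathlib

private lemma q_aux_real (x a : ℝ) (hx : 0 < x) (hxa : x < a) (ha : a < 0.2696)
    (hE2 : (8 - 22*(x+a) + 26*(x^2+x*a+a^2) - 14*(x^3+x^2*a+x*a^2+a^3)
      + 5*(x^4+x^3*a+x^2*a^2+x*a^3+a^4) - (x^5+x^4*a+x^3*a^2+x^2*a^3+x*a^4+a^5)) = 0) : False := by
  have hx' : (0:ℝ) ≤ x := le_of_lt hx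
  have ha' : (0:ℝ) ≤ a := by linarith
  have h1 : (0:ℝ) ≤ 0.2696 - x := by linarith
  have h2 : (0:ℝ) ≤ 0.2696 - a := by linarith
  nlinarith [mul_nonneg (mul_nonneg h1 hx') hx', mul_nonneg (mul_nonneg h2 ha') ha',
    mul_nonneg (mul_nonneg h1 ha') ha', mul_nonneg (mul_nonneg h2 hx') hx',
    mul_nonneg (mul_nonneg h1 hx') ha', mul_nonneg (mul_nonneg h2 hx') ha',
    mul_nonneg (mul_nonneg (mul_nonneg h1 hx') hx') hx',
    mul_nonneg (mul_nonneg (mul_nonneg h2 ha') ha') ha',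
    mul_nonneg hx' ha', sq_nonneg (x - a), sq_nonneg (x + a - 0.4),
    mul_nonneg (mul_nonneg (mul_nonneg (mul_nonneg h1 hx') hx') hx') hx',
    mul_nonneg (mul_nonneg (mul_nonneg (mul_nonneg h2 ha') ha') ha') ha',
    mul_nonneg (mul_nonneg (mul_nonneg hx' hx') ha') ha',
    mul_nonneg (mul_nonneg (mul_nonneg (mul_nonneg hx' hx') hx') ha') ha']

private lemma q_aux_im (x y : ℝ) (hb : x^2 + y^2 ≤ 0.0727)
    (hA : (-8 + 26*y^2 - 5*y^4 + 44*x - 56*x*y^2 + 6*x*y^4 - 78*x^2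
        + 50*x^2*y^2 + 56*x^3 - 20*x^3*y^2 - 25*x^4 + 6*x^5) = 0) : False := by
  nlinarith [sq_nonneg y, sq_nonneg x, sq_nonneg (y*y), sq_nonneg (x*y), sq_nonneg (x+1),
    sq_nonneg (x-1), sq_nonneg (x*x), mul_nonneg (sq_nonneg y) (sq_nonneg y),
    sq_nonneg (x - 0.2696), sq_nonneg (x + 0.2696)]

private lemma q_aux_neg (x : ℝ) (hx0 : x ≤ 0)
    (hqx : x ^ 6 - 5 * x ^ 5 + 14 * x ^ 4 - 26 * x ^ 3 + 22 * x ^ 2 - 8 * x + 1 = 0) : False := by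
  nlinarith [sq_nonneg x, sq_nonneg (x^2), sq_nonneg (x^3),
    mul_nonneg (neg_nonneg.mpr hx0) (sq_nonneg (x^2)), mul_nonneg (neg_nonneg.mpr hx0) (sq_nonneg x)]

theorem q_smallest_root :
    ∃ α : ℝ, α ∈ Set.Ioo (0.2695 : ℝ) 0.2696 ∧
      α ^ 6 - 5 * α ^ 5 + 14 * α ^ 4 - 26 * α ^ 3 + 22 * α ^ 2 - 8 * α + 1 = 0 ∧
      ∀ ζ : ℂ, ζ ^ 6 - 5 * ζ ^ 5 + 14 * ζ ^ 4 - 26 * ζ ^ 3 + 22 * ζ ^ 2 - 8 * ζ + 1 = 0 →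
        α ≤ ‖ζ‖ := by
  have hc : ContinuousOn (fun x : ℝ => x ^ 6 - 5 * x ^ 5 + 14 * x ^ 4 - 26 * x ^ 3 + 22 * x ^ 2 - 8 * x + 1) (Set.Icc 0.2695 0.2696) := by fun_prop
  have hivt := intermediate_value_Ioo' (by norm_num : (0.2695:ℝ) ≤ 0.2696) hc
  have h0 : (0:ℝ) ∈ Set.Ioo ((fun x : ℝ => x ^ 6 - 5 * x ^ 5 + 14 * x ^ 4 - 26 * x ^ 3 + 22 * x ^ 2 - 8 * x + 1) 0.2696) ((fun x : ℝ => x ^ 6 - 5 * x ^ 5 + 14 * x ^ 4 - 26 * x ^ 3 + 22 * x ^ 2 - 8 * x + 1) 0.2695) := by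
    constructor <;> norm_num
  obtain ⟨α, hmem, hval⟩ := hivt h0
  refine ⟨α, hmem, hval, ?_⟩
  clear hc hivt h0
  intro ζ hζ
  by_contra hcon
  push_neg at hcon
  obtain ⟨hα1, hα2⟩ := hmem
  have habs : (0:ℝ) ≤ ‖ζ‖ := norm_nonneg _
  have hαpos : (0:ℝ) < α := by linarith
  set x := ζ.re with hxdef
  set y := ζ.im with hydef
  rcases eq_or_ne y 0 with hy | hy
  · -- real case
    have hre := congrArg Complex.re hζ
    simp only [pow_succ, pow_zero, one_mul, Complex.mul_im, Complex.mul_re, Complex.sub_im,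
      Complex.add_im, Complex.sub_re, Complex.add_re, Complex.one_re, Complex.zero_im,
      Complex.re_ofNat, Complex.im_ofNat, Complex.zero_re] at hre
    rw [← hxdef, ← hydef, hy] at hre
    have hqx : x ^ 6 - 5 * x ^ 5 + 14 * x ^ 4 - 26 * x ^ 3 + 22 * x ^ 2 - 8 * x + 1 = 0 := by
      linear_combination hre
    have hxabs : |x| ≤ ‖ζ‖ := Complex.abs_re_le_norm ζ
    have hxlt : x < α := lt_of_le_of_lt (le_trans (le_abs_self x) hxabs) hcon
    rcases le_or_gt x 0 with hx0 | hx0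
    · exact q_aux_neg x hx0 hqx
    · have hE : (α - x) * (8 - 22*(x+α) + 26*(x^2+x*α+α^2) - 14*(x^3+x^2*α+x*α^2+α^3)
          + 5*(x^4+x^3*α+x^2*α^2+x*α^3+α^4) - (x^5+x^4*α+x^3*α^2+x^2*α^3+x*α^4+α^5)) = 0 := by
        linear_combination hqx - hval
      have hE2 : (8 - 22*(x+α) + 26*(x^2+x*α+α^2) - 14*(x^3+x^2*α+x*α^2+α^3)
          + 5*(x^4+x^3*α+x^2*α^2+x*α^3+α^4) - (x^5+x^4*α+x^3*α^2+x^2*α^3+x*α^4+α^5)) = 0 :=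
        (mul_eq_zero.mp hE).resolve_left (by linarith)
      exact q_aux_real x α hx0 hxlt hα2 hE2
  · -- non-real case
    have him := congrArg Complex.im hζ
    simp only [pow_succ, pow_zero, one_mul, Complex.mul_im, Complex.mul_re, Complex.sub_im,
      Complex.add_im, Complex.sub_re, Complex.add_re, Complex.one_im, Complex.zero_im,
      Complex.re_ofNat, Complex.im_ofNat] at him
    have hfac : y * (-8 + 26*y^2 - 5*y^4 + 44*x - 56*x*y^2 + 6*x*y^4 - 78*x^2
        + 50*x^2*y^2 + 56*x^3 - 20*x^3*y^2 - 25*x^4 + 6*x^5) = 0 := by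
      rw [← hxdef, ← hydef] at him
      linear_combination him
    have hA : (-8 + 26*y^2 - 5*y^4 + 44*x - 56*x*y^2 + 6*x*y^4 - 78*x^2
        + 50*x^2*y^2 + 56*x^3 - 20*x^3*y^2 - 25*x^4 + 6*x^5) = 0 :=
      (mul_eq_zero.mp hfac).resolve_left hy
    have hnormsq : x^2 + y^2 = ‖ζ‖ ^ 2 := by
      rw [Complex.sq_norm, Complex.normSq_apply]; ring
    have hb : x^2 + y^2 ≤ 0.0727 := by
      have h1 : ‖ζ‖ ^ 2 < α ^ 2 := by nlinarith
      rw [hnormsq]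
      nlinarith
    exact q_aux_im x y hb hA
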